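/- Let A be an allocation of M among n agents, let i be an agent, let ε > 0, and fix a removal choice for i such that for every agent h ≠ i: if an item g_{i,h} is chosen, then u_i(A_i \ {g_{i,h}}) ≥ u_i(A_h \ {g_{i,h}}) − ε, and if no item is chosen, then u_i(A_i) ≥ u_i(A_h) − ε. Let S_i be the set of chosen items and M'_i = M \ S_i. Then u_i(A_i) ≥ (1/n)·u_i(M'_i) − ε. -/

import Mathlib

open Finset

/-- Average value of a bundle: total value divided by cardinality; `0` for the empty bundle. -/
noncomputable def avgVal {G : Type*} (v : G → ℝ) (S : Finset G) : ℝ :=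
  (∑ g ∈ S, v g) / (S.card : ℝ)

/-- `A` is an allocation of the item set `M` among `n` agents: the bundles are pairwise
disjoint and their union is `M`. -/
def IsAllocation {G : Type*} [DecidableEq G] (M : Finset G) {n : ℕ}
    (A : Fin n → Finset G) : Prop :=
  (∀ i j : Fin n, i ≠ j → Disjoint (A i) (A j)) ∧ Finset.univ.biUnion A = M

/-- Average envy-freeness: every agent weakly prefers (on average) their own bundle. -/
def AEF {G : Type*} {n : ℕ} (v : Fin n → G → ℝ) (A : Fin n → Finset G) : Prop :=
  ∀ i h : Fin n, avgVal (v i) (A h) ≤ avgVal (v i) (A i)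

/-- Average envy-freeness up to one item. -/
def AEF1 {G : Type*} [DecidableEq G] {n : ℕ} (v : Fin n → G → ℝ)
    (A : Fin n → Finset G) : Prop :=
  ∀ i h : Fin n, (A i ∪ A h).Nonempty →
    ∃ g ∈ A i ∪ A h, avgVal (v i) ((A h).erase g) ≤ avgVal (v i) ((A i).erase g)

lemma avgVal_nonneg' {G : Type*} (v : G → ℝ) (hv : ∀ g, 0 ≤ v g) (S : Finset G) :
    0 ≤ avgVal v S :=
  div_nonneg (Finset.sum_nonneg fun g _ => hv g) (Nat.cast_nonneg _)

lemma sum_le_of_avg_le' {G : Type*} (v : G → ℝ) (S : Finset G) (B : ℝ) (hB : 0 ≤ B)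
    (h : avgVal v S ≤ B) : ∑ g ∈ S, v g ≤ B * S.card := by
  rcases S.eq_empty_or_nonempty with rfl | hS
  · simp
  · have hc : (0:ℝ) < S.card := by exact_mod_cast Finset.card_pos.mpr hS
    rw [avgVal, div_le_iff₀ hc] at h
    exact h

lemma avg_subset_le' {G : Type*} [DecidableEq G] (v : G → ℝ) (hv : ∀ g, 0 ≤ v g)
    (P Q : Finset G) (hPQ : P ⊆ Q) (n : ℕ)
    (hcard : P.Nonempty → Q.card ≤ n * P.card) :
    avgVal v P ≤ (n : ℝ) * avgVal v Q := by
  rcases P.eq_empty_or_nonempty with rfl | hP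
  · simpa [avgVal] using mul_nonneg (Nat.cast_nonneg n) (avgVal_nonneg' v hv Q)
  · have hp : (0:ℝ) < P.card := by exact_mod_cast Finset.card_pos.mpr hP
    have hq : (0:ℝ) < Q.card := by
      exact_mod_cast Finset.card_pos.mpr (hP.mono hPQ)
    have ht : ∑ g ∈ P, v g ≤ ∑ g ∈ Q, v g :=
      Finset.sum_le_sum_of_subset_of_nonneg hPQ (fun g _ _ => hv g)
    have hs : (0:ℝ) ≤ ∑ g ∈ Q, v g := Finset.sum_nonneg fun g _ => hv g
    have hqn : (Q.card : ℝ) ≤ (n:ℝ) * P.card := by exact_mod_cast hcard hP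
    rw [avgVal, avgVal, ← mul_div_assoc, div_le_div_iff₀ hp hq]
    nlinarith [Finset.sum_nonneg (fun g (_ : g ∈ P) => hv g)]

/-- If agent `i`'s envy towards every other agent is at most `ε` (after removing the item
chosen by `i`'s removal choice, if any), then the average value of `i`'s bundle is at
least `(1/n)·u_i(M \ S_i) - ε`, where `S_i` is the set of chosen items. -/
theorem bounded_envy_lower_bound {G : Type*} [DecidableEq G] (M : Finset G) (n : ℕ)
    (v : Fin n → G → ℝ) (hv : ∀ i g, 0 ≤ v i g)
    (A : Fin n → Finset G) (hA : IsAllocation M A)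
    (i : Fin n) (ε : ℝ) (hε : 0 < ε)
    (rc : Fin n → Option G)
    (hrc : ∀ h : Fin n, h ≠ i →
      (∀ g : G, rc h = some g → g ∈ A i ∪ A h ∧
        avgVal (v i) ((A h).erase g) - ε ≤ avgVal (v i) ((A i).erase g)) ∧
      (rc h = none → avgVal (v i) (A h) - ε ≤ avgVal (v i) (A i)))
    (S : Finset G) (hS : ∀ g : G, g ∈ S ↔ ∃ h : Fin n, h ≠ i ∧ rc h = some g) :
    (1 / (n : ℝ)) * avgVal (v i) (M \ S) - ε ≤ avgVal (v i) (A i) := by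
  classical
  obtain ⟨hdisj, hM⟩ := hA
  have hn : 0 < n := i.pos
  set α := avgVal (v i) (A i) with hαdef
  have hα : 0 ≤ α := avgVal_nonneg' _ (hv i) _
  set B : ℝ := n * α + n * ε with hBdef
  have hn1 : (1:ℝ) ≤ n := by exact_mod_cast hn
  have hB0 : 0 ≤ B := by
    have : (0:ℝ) ≤ (n:ℝ) := by positivity
    nlinarith
  -- bound on |S|
  have hSsub : S ⊆ (univ.erase i).biUnion (fun h => (rc h).toFinset) := by
    intro g hg
    obtain ⟨h, hhi, hrceq⟩ := (hS g).mp hg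
    exact Finset.mem_biUnion.mpr ⟨h, Finset.mem_erase.mpr ⟨hhi, mem_univ h⟩, by simp [hrceq]⟩
  have hScard : S.card ≤ n - 1 := by
    calc S.card ≤ ((univ.erase i).biUnion (fun h => (rc h).toFinset)).card :=
          Finset.card_le_card hSsub
      _ ≤ ∑ h ∈ univ.erase i, ((rc h).toFinset).card := Finset.card_biUnion_le
      _ ≤ ∑ _h ∈ univ.erase i, 1 := Finset.sum_le_sum (fun h _ => by cases rc h <;> simp)
      _ = n - 1 := by
          rw [Finset.sum_const, smul_eq_mul, mul_one,
            Finset.card_erase_of_mem (mem_univ i), Finset.card_univ, Fintype.card_fin]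
  -- chosen items in A h characterization
  have hSA : ∀ h : Fin n, h ≠ i → ∀ g, g ∈ S → g ∈ A h → rc h = some g := by
    intro h hhi g hgS hgA
    obtain ⟨h', hh'i, hrceq⟩ := (hS g).mp hgS
    by_cases hh : h' = h
    · rwa [hh] at hrceq
    · exfalso
      have hgmem := ((hrc h' hh'i).1 g hrceq).1
      rcases Finset.mem_union.mp hgmem with h1 | h1
      · exact Finset.disjoint_left.mp (hdisj i h (Ne.symm hhi)) h1 hgA
      · exact Finset.disjoint_left.mp (hdisj h' h hh) h1 hgA
  -- per-part bound
  have hpart : ∀ h : Fin n, ∑ g ∈ A h \ S, v i g ≤ B * ((A h \ S).card : ℝ) := by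
    intro h
    by_cases hhi : h = i
    · rw [hhi]
      apply sum_le_of_avg_le' _ _ _ hB0
      have key : avgVal (v i) (A i \ S) ≤ (n:ℝ) * α := by
        apply avg_subset_le' _ (hv i) _ _ Finset.sdiff_subset n
        intro hne
        have h1 : (A i).card ≤ (A i \ S).card + S.card :=
          Finset.card_le_card_sdiff_add_card
        have h2 : 1 ≤ (A i \ S).card := Finset.card_pos.mpr hne
        have h3 : (A i).card + 1 ≤ (A i \ S).card + n := by omega
        set p := (A i \ S).card
        have c1 : ((A i).card : ℤ) + 1 ≤ (p : ℤ) + (n : ℤ) := by exact_mod_cast h3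
        have c2 : (1 : ℤ) ≤ (p : ℤ) := by exact_mod_cast h2
        have c3 : (1 : ℤ) ≤ (n : ℤ) := by exact_mod_cast hn
        zify
        nlinarith [mul_nonneg (by linarith : (0:ℤ) ≤ (n:ℤ) - 1)
          (by linarith : (0:ℤ) ≤ (p:ℤ) - 1)]
      calc avgVal (v i) (A i \ S) ≤ (n:ℝ) * α := key
        _ ≤ B := by nlinarith
    · have hn2 : 2 ≤ n := by
        have h1 := h.isLt
        have h2 := i.isLt
        have h3 : h.val ≠ i.val := fun e => hhi (Fin.ext e)
        omega
      cases hrcv : rc h with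
      | none =>
        have hAh : A h \ S = A h := by
          apply Finset.sdiff_eq_self_iff_disjoint.mpr
          rw [Finset.disjoint_right]
          intro g hgS hgA
          have := hSA h hhi g hgS hgA
          rw [hrcv] at this
          exact nomatch this
        rw [hAh]
        apply sum_le_of_avg_le' _ _ _ hB0
        have hineq := (hrc h hhi).2 hrcv
        have hn2' : (2:ℝ) ≤ n := by exact_mod_cast hn2
        nlinarith
      | some g =>
        have hgS : g ∈ S := (hS g).mpr ⟨h, hhi, hrcv⟩
        have hAh : A h \ S = (A h).erase g := by
          ext x
          simp only [Finset.mem_sdiff, Finset.mem_erase]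
          constructor
          · rintro ⟨hxA, hxS⟩
            refine ⟨fun e => hxS (e ▸ hgS), hxA⟩
          · rintro ⟨hxg, hxA⟩
            refine ⟨hxA, fun hxS => ?_⟩
            have := hSA h hhi x hxS hxA
            rw [hrcv] at this
            exact hxg (Option.some_injective _ this.symm)
        rw [hAh]
        apply sum_le_of_avg_le' _ _ _ hB0
        obtain ⟨hgmem, hineq⟩ := (hrc h hhi).1 g hrcv
        have h2 : avgVal (v i) ((A i).erase g) ≤ (n:ℝ) * α := by
          apply avg_subset_le' _ (hv i) _ _ (Finset.erase_subset g (A i)) n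
          intro hne
          by_cases hg : g ∈ A i
          · have hk : 1 ≤ ((A i).erase g).card := Finset.card_pos.mpr hne
            rw [Finset.card_erase_of_mem hg] at hk ⊢
            have hk2 : 2 ≤ (A i).card := by omega
            have c1 : (2 : ℤ) ≤ ((A i).card : ℤ) := by exact_mod_cast hk2
            have c2 : (2 : ℤ) ≤ (n : ℤ) := by exact_mod_cast hn2
            zify [show 1 ≤ (A i).card by omega]
            nlinarith [mul_nonneg (by linarith : (0:ℤ) ≤ (n:ℤ) - 1)
              (by linarith : (0:ℤ) ≤ ((A i).card:ℤ) - 2)]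
          · rw [Finset.erase_eq_of_notMem hg]
            nlinarith [Finset.card_pos.mpr (hne.mono (Finset.erase_subset g (A i))), hn]
        have hn2' : (2:ℝ) ≤ n := by exact_mod_cast hn2
        calc avgVal (v i) ((A h).erase g) ≤ avgVal (v i) ((A i).erase g) + ε := by linarith
          _ ≤ (n:ℝ) * α + ε := by linarith
          _ ≤ B := by nlinarith
  -- assemble
  have hMS : M \ S = univ.biUnion (fun h => A h \ S) := by
    rw [← hM]
    ext x
    simp only [Finset.mem_sdiff, Finset.mem_biUnion, mem_univ, true_and]
    tauto
  have hdisj' : ∀ a ∈ (univ : Finset (Fin n)), ∀ b ∈ univ, a ≠ b →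
      Disjoint (A a \ S) (A b \ S) := fun a _ b _ hab =>
    (hdisj a b hab).mono Finset.sdiff_subset Finset.sdiff_subset
  have hsum : ∑ g ∈ M \ S, v i g = ∑ h : Fin n, ∑ g ∈ A h \ S, v i g := by
    rw [hMS]
    exact Finset.sum_biUnion hdisj'
  have hcard : ((M \ S).card : ℝ) = ∑ h : Fin n, ((A h \ S).card : ℝ) := by
    rw [hMS, Finset.card_biUnion hdisj']
    push_cast
    rfl
  have hfinal : ∑ g ∈ M \ S, v i g ≤ B * ((M \ S).card : ℝ) := by
    rw [hsum, hcard, Finset.mul_sum]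
    exact Finset.sum_le_sum fun h _ => hpart h
  have havg : avgVal (v i) (M \ S) ≤ B := by
    rcases (M \ S).eq_empty_or_nonempty with he | hne
    · rw [he]
      simpa [avgVal] using hB0
    · rw [avgVal, div_le_iff₀ (by exact_mod_cast Finset.card_pos.mpr hne)]
      linarith [hfinal]
  have hn' : (0:ℝ) < n := by exact_mod_cast hn
  have hstep : (1 / (n:ℝ)) * avgVal (v i) (M \ S) - ε ≤ (1 / (n:ℝ)) * B - ε := by
    have h1 : (0:ℝ) ≤ 1 / (n:ℝ) := by positivity
    nlinarith [mul_le_mul_of_nonneg_left havg h1]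
  have hend : (1 / (n:ℝ)) * B - ε = α := by
    have hne0 : (n:ℝ) ≠ 0 := ne_of_gt hn'
    rw [hBdef]
    field_simp
    ring
  linarith [hstep, hend.ge, hend.le]
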